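/- Let 𝒜 be an invertible 4 × 4 complex matrix with rows 𝔞₀, 𝔞₁, 𝔞₂, 𝔞₃ ∈ ℂ⁴ (rows indexed by the basis order |00⟩,|01⟩,|10⟩,|11⟩), and let 𝒱 ⊆ ℂ² ⊗ ℂ² ⊗ ℂ² be the orthogonal complement of the span of the vectors (1,α) ⊗ 𝒜(1,α,α²,α³) over all α ∈ ℂ. For (β₀,β₁) ∈ ℂ², let 𝒳_{B|AC}(β₀,β₁) be the 5 × 4 matrix whose four columns are: (β₀𝔞₀ + β₁𝔞₂) with a 0 appended as fifth entry; (β₀𝔞₁ + β₁𝔞₃) with a 0 appended; (β₀𝔞₀ + β₁𝔞₂) with a 0 prepended as first entry; and (β₀𝔞₁ + β₁𝔞₃) with a 0 prepended. Likewise let 𝒳_{C|AB}(γ₀,γ₁) be the 5 × 4 matrix built the same way from the vectors γ₀𝔞₀ + γ₁𝔞₁ and γ₀𝔞₂ + γ₁𝔞₃. Then 𝒱 is a genuinely entangled subspace of ℂ² ⊗ ℂ² ⊗ ℂ² if and only if 𝒳_{B|AC}(β₀,β₁) has rank 4 for every nonzero (β₀,β₁) ∈ ℂ² and 𝒳_{C|AB}(γ₀,γ₁)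 has rank 4 for every nonzero (γ₀,γ₁) ∈ ℂ². -/

import Mathlib

noncomputable section

abbrev TriH (d₁ d₂ d₃ : ℕ) := EuclideanSpace ℂ (Fin d₁ × Fin d₂ × Fin d₃)

def BiprodA {d₁ d₂ d₃ : ℕ} (ψ : TriH d₁ d₂ d₃) : Prop :=
  ∃ (a : Fin d₁ → ℂ) (g : Fin d₂ × Fin d₃ → ℂ), ∀ i j k, ψ (i, j, k) = a i * g (j, k)

def BiprodB {d₁ d₂ d₃ : ℕ} (ψ : TriH d₁ d₂ d₃) : Prop :=
  ∃ (b : Fin d₂ → ℂ) (g : Fin d₁ × Fin d₃ → ℂ), ∀ i j k, ψ (i, j, k) = b j * g (i, k)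

def BiprodC {d₁ d₂ d₃ : ℕ} (ψ : TriH d₁ d₂ d₃) : Prop :=
  ∃ (c : Fin d₃ → ℂ) (g : Fin d₁ × Fin d₂ → ℂ), ∀ i j k, ψ (i, j, k) = c k * g (i, j)

def IsGME3 {d₁ d₂ d₃ : ℕ} (ψ : TriH d₁ d₂ d₃) : Prop :=
  ψ ≠ 0 ∧ ¬ BiprodA ψ ∧ ¬ BiprodB ψ ∧ ¬ BiprodC ψ

def IsGES3 {d₁ d₂ d₃ : ℕ} (V : Submodule ℂ (TriH d₁ d₂ d₃)) : Prop :=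
  ∀ ψ ∈ V, ψ ≠ 0 → IsGME3 ψ

/-- The identification `ℂ² ⊗ ℂ² ≅ ℂ⁴` via binary expansion: `(j,k) ↦ 2j + k`. -/
def idx4 (j k : Fin 2) : Fin 4 := ⟨2 * j.1 + k.1, by have := j.2; have := k.2; omega⟩

/-- The family `(1,α) ⊗ 𝒜(1,α,α²,α³)` spanning `𝒱^⊥`. -/
def curveA (A : Matrix (Fin 4) (Fin 4) ℂ) (α : ℂ) : TriH 2 2 2 :=
  WithLp.toLp 2 (fun p : Fin 2 × Fin 2 × Fin 2 =>
    ![(1 : ℂ), α] p.1 * A.mulVec ![1, α, α ^ 2, α ^ 3] (idx4 p.2.1 p.2.2))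

/-- The `5 × 4` matrix `𝒳_{B|AC}(β₀,β₁)` built from the rows `𝔞₀,…,𝔞₃` of `𝒜`:
its columns are `β₀𝔞₀+β₁𝔞₂` and `β₀𝔞₁+β₁𝔞₃` with a `0` appended, and the same two
vectors with a `0` prepended. -/
def XBAC (A : Matrix (Fin 4) (Fin 4) ℂ) (β₀ β₁ : ℂ) : Matrix (Fin 5) (Fin 4) ℂ :=
  let u : Fin 4 → ℂ := fun t => β₀ * A 0 t + β₁ * A 2 t
  let v : Fin 4 → ℂ := fun t => β₀ * A 1 t + β₁ * A 3 t
  !![u 0, v 0, 0, 0;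
     u 1, v 1, u 0, v 0;
     u 2, v 2, u 1, v 1;
     u 3, v 3, u 2, v 2;
     0, 0, u 3, v 3]

/-- The `5 × 4` matrix `𝒳_{C|AB}(γ₀,γ₁)`, built likewise from `γ₀𝔞₀+γ₁𝔞₁` and
`γ₀𝔞₂+γ₁𝔞₃`. -/
def XCAB (A : Matrix (Fin 4) (Fin 4) ℂ) (γ₀ γ₁ : ℂ) : Matrix (Fin 5) (Fin 4) ℂ :=
  let u : Fin 4 → ℂ := fun t => γ₀ * A 0 t + γ₁ * A 1 t
  let v : Fin 4 → ℂ := fun t => γ₀ * A 2 t + γ₁ * A 3 t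
  !![u 0, v 0, 0, 0;
     u 1, v 1, u 0, v 0;
     u 2, v 2, u 1, v 1;
     u 3, v 3, u 2, v 2;
     0, 0, u 3, v 3]

private lemma poly4 (a0 a1 a2 a3 a4 : ℂ)
    (h : ∀ x : ℂ, a0 + a1*x + a2*x^2 + a3*x^3 + a4*x^4 = 0) :
    a0 = 0 ∧ a1 = 0 ∧ a2 = 0 ∧ a3 = 0 ∧ a4 = 0 := by
  have h0 := h 0
  have h1 := h 1
  have h2 := h (-1)
  have h3 := h 2
  have h4 := h (-2)
  refine ⟨by linear_combination h0,
    by linear_combination (2/3 : ℂ)*h1 - (2/3 : ℂ)*h2 - (1/12 : ℂ)*h3 + (1/12 : ℂ)*h4,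
    by linear_combination (-5/4 : ℂ)*h0 + (2/3 : ℂ)*h1 + (2/3 : ℂ)*h2 - (1/24 : ℂ)*h3 - (1/24 : ℂ)*h4,
    by linear_combination (-1/6 : ℂ)*h1 + (1/6 : ℂ)*h2 + (1/12 : ℂ)*h3 - (1/12 : ℂ)*h4,
    by linear_combination (1/4 : ℂ)*h0 - (1/6 : ℂ)*h1 - (1/6 : ℂ)*h2 + (1/24 : ℂ)*h3 + (1/24 : ℂ)*h4⟩

private lemma rank_eq_four_iff (M : Matrix (Fin 5) (Fin 4) ℂ) :
    M.rank = 4 ↔ ∀ g : Fin 4 → ℂ, M.mulVec g = 0 → g = 0 := by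
  have hrn := LinearMap.finrank_range_add_finrank_ker M.mulVecLin
  have hdim : Module.finrank ℂ (Fin 4 → ℂ) = 4 := by simp
  rw [hdim] at hrn
  rw [Matrix.rank]
  constructor
  · intro hr g hg
    have hker : Module.finrank ℂ (LinearMap.ker M.mulVecLin) = 0 := by omega
    have : LinearMap.ker M.mulVecLin = ⊥ := Submodule.finrank_eq_zero.mp hker
    have := LinearMap.ker_eq_bot'.mp this g (by simpa [Matrix.mulVecLin_apply] using hg)
    exact this
  · intro hinj
    have : LinearMap.ker M.mulVecLin = ⊥ :=
      LinearMap.ker_eq_bot'.mpr fun g hg => hinj g (by simpa [Matrix.mulVecLin_apply] using hg)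
    rw [this] at hrn
    simpa using hrn

local notation "cj" => (starRingEnd ℂ)

@[simp] private lemma idx00 : idx4 0 0 = 0 := by decide

@[simp] private lemma idx01 : idx4 0 1 = 1 := by decide

@[simp] private lemma idx10 : idx4 1 0 = 2 := by decide

@[simp] private lemma idx11 : idx4 1 1 = 3 := by decide

/-- coefficient functionals cutting out `𝒱`. -/

def cf (A : Matrix (Fin 4) (Fin 4) ℂ) (ψ : TriH 2 2 2) : Fin 5 → ℂ
  | 0 => ∑ j : Fin 2, ∑ k : Fin 2, cj (A (idx4 j k) 0) * ψ (0, j, k)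
  | 1 => ∑ j : Fin 2, ∑ k : Fin 2,
      (cj (A (idx4 j k) 1) * ψ (0, j, k) + cj (A (idx4 j k) 0) * ψ (1, j, k))
  | 2 => ∑ j : Fin 2, ∑ k : Fin 2,
      (cj (A (idx4 j k) 2) * ψ (0, j, k) + cj (A (idx4 j k) 1) * ψ (1, j, k))
  | 3 => ∑ j : Fin 2, ∑ k : Fin 2,
      (cj (A (idx4 j k) 3) * ψ (0, j, k) + cj (A (idx4 j k) 2) * ψ (1, j, k))
  | 4 => ∑ j : Fin 2, ∑ k : Fin 2, cj (A (idx4 j k) 3) * ψ (1, j, k)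

private lemma inner_curve (A : Matrix (Fin 4) (Fin 4) ℂ) (ψ : TriH 2 2 2) (α : ℂ) :
    (inner ℂ (curveA A α) ψ : ℂ) = ∑ m : Fin 5, cf A ψ m * (cj α) ^ (m : ℕ) := by
  simp only [PiLp.inner_apply, RCLike.inner_apply, curveA, Matrix.mulVec, dotProduct]
  simp only [Fintype.sum_prod_type]
  simp only [Fin.sum_univ_two, Fin.sum_univ_four, Fin.sum_univ_five,
    Matrix.cons_val_zero, Matrix.cons_val_one, Matrix.head_cons, Matrix.cons_val_two,
    Matrix.cons_val_three, Matrix.tail_cons, idx00, idx01, idx10, idx11,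
    cf, map_add, map_mul, map_one, map_pow,
    show ((0:Fin 5):ℕ) = 0 from rfl, show ((1:Fin 5):ℕ) = 1 from rfl,
    show ((2:Fin 5):ℕ) = 2 from rfl, show ((3:Fin 5):ℕ) = 3 from rfl,
    show ((4:Fin 5):ℕ) = 4 from rfl]
  ring

private lemma mem_V_iff (A : Matrix (Fin 4) (Fin 4) ℂ) (ψ : TriH 2 2 2) :
    ψ ∈ (Submodule.span ℂ (Set.range (curveA A)))ᗮ ↔ ∀ m : Fin 5, cf A ψ m = 0 := by
  rw [Submodule.mem_orthogonal]
  constructor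
  · intro h
    have hα : ∀ x : ℂ, ∑ m : Fin 5, cf A ψ m * x ^ (m : ℕ) = 0 := by
      intro x
      have := h (curveA A (cj x)) (Submodule.subset_span ⟨cj x, rfl⟩)
      rw [inner_curve] at this
      simpa using this
    have h5 : ∀ x : ℂ, cf A ψ 0 + cf A ψ 1 * x + cf A ψ 2 * x^2 + cf A ψ 3 * x^3
        + cf A ψ 4 * x^4 = 0 := by
      intro x
      have := hα x
      rw [Fin.sum_univ_five] at this
      simpa using this
    obtain ⟨h0, h1, h2, h3, h4⟩ := poly4 _ _ _ _ _ h5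
    intro m
    fin_cases m <;> assumption
  · intro h u hu
    induction hu using Submodule.span_induction with
    | mem u hu =>
      obtain ⟨α, rfl⟩ := hu
      rw [inner_curve]
      simp [h]
    | zero => simp
    | add u v _ _ hu hv => rw [inner_add_left, hu, hv]; ring
    | smul c u _ hu => rw [inner_smul_left, hu]; ring

private lemma noBiprodA (A : Matrix (Fin 4) (Fin 4) ℂ) (hA : IsUnit A.det)
    (ψ : TriH 2 2 2) (hmem : ∀ m : Fin 5, cf A ψ m = 0)
    (h : BiprodA ψ) : ψ = 0 := by
  obtain ⟨a, g, hg⟩ := h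
  set x : Fin 4 → ℂ := fun s => ∑ j : Fin 2, ∑ k : Fin 2, cj (A (idx4 j k) s) * g (j, k)
    with hx
  have e0 : a 0 * x 0 = 0 := by
    rw [← hmem 0]; simp only [cf, hx, Fin.sum_univ_two, hg]; ring
  have e1 : a 0 * x 1 + a 1 * x 0 = 0 := by
    rw [← hmem 1]; simp only [cf, hx, Fin.sum_univ_two, hg]; ring
  have e2 : a 0 * x 2 + a 1 * x 1 = 0 := by
    rw [← hmem 2]; simp only [cf, hx, Fin.sum_univ_two, hg]; ring
  have e3 : a 0 * x 3 + a 1 * x 2 = 0 := by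
    rw [← hmem 3]; simp only [cf, hx, Fin.sum_univ_two, hg]; ring
  have e4 : a 1 * x 3 = 0 := by
    rw [← hmem 4]; simp only [cf, hx, Fin.sum_univ_two, hg]; ring
  by_cases ha : a 0 = 0 ∧ a 1 = 0
  · ext p
    obtain ⟨i, j, k⟩ := p
    rw [hg]
    fin_cases i <;> simp [ha.1, ha.2]
  · have hx0 : ∀ s : Fin 4, x s = 0 := by
      by_cases ha0 : a 0 = 0
      · have ha1 : a 1 ≠ 0 := fun h1 => ha ⟨ha0, h1⟩
        have h0 : x 0 = 0 :=
          (mul_eq_zero.mp (by linear_combination e1 - x 1 * ha0)).resolve_left ha1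
        have h1 : x 1 = 0 :=
          (mul_eq_zero.mp (by linear_combination e2 - x 2 * ha0)).resolve_left ha1
        have h2 : x 2 = 0 :=
          (mul_eq_zero.mp (by linear_combination e3 - x 3 * ha0)).resolve_left ha1
        have h3 : x 3 = 0 := (mul_eq_zero.mp e4).resolve_left ha1
        intro s; fin_cases s <;> assumption
      · have h0 : x 0 = 0 := (mul_eq_zero.mp e0).resolve_left ha0
        have h1 : x 1 = 0 := by
          have := e1; rw [h0, mul_zero, add_zero] at this
          exact (mul_eq_zero.mp this).resolve_left ha0
        have h2 : x 2 = 0 := by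
          have := e2; rw [h1, mul_zero, add_zero] at this
          exact (mul_eq_zero.mp this).resolve_left ha0
        have h3 : x 3 = 0 := by
          have := e3; rw [h2, mul_zero, add_zero] at this
          exact (mul_eq_zero.mp this).resolve_left ha0
        intro s; fin_cases s <;> assumption
    have hAH : Function.Injective (A.conjTranspose.mulVec) :=
      Matrix.mulVec_injective_iff_isUnit.mpr ((Matrix.isUnit_iff_isUnit_det _).mpr
        (by rwa [Matrix.det_conjTranspose, isUnit_star]))
    set v : Fin 4 → ℂ := ![g (0,0), g (0,1), g (1,0), g (1,1)] with hv
    have hmv : ∀ s, A.conjTranspose.mulVec v s = x s := by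
      intro s
      simp [Matrix.mulVec, dotProduct, Matrix.conjTranspose_apply,
        Fin.sum_univ_four, hx, Fin.sum_univ_two, hv]
      ring
    have hveq : v = 0 := by
      apply hAH
      rw [Matrix.mulVec_zero]
      funext s
      rw [hmv s, hx0 s]; simp
    have hgz : ∀ j k : Fin 2, g (j, k) = 0 := by
      intro j k
      have := congrFun hveq (idx4 j k)
      fin_cases j <;> fin_cases k <;> simpa [hv] using this
    ext p
    obtain ⟨i, j, k⟩ := p
    rw [hg, hgz, mul_zero]
    rfl

private lemma cf_biprodB (A : Matrix (Fin 4) (Fin 4) ℂ) (b : Fin 2 → ℂ)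
    (g : Fin 2 × Fin 2 → ℂ) (ψ : TriH 2 2 2)
    (hg : ∀ i j k, ψ (i, j, k) = b j * g (i, k)) (m : Fin 5) :
    (XBAC A (cj (b 0)) (cj (b 1))).mulVec
      ![cj (g (0, 0)), cj (g (0, 1)), cj (g (1, 0)), cj (g (1, 1))] m = cj (cf A ψ m) := by
  fin_cases m <;>
  · simp [cf, Fin.sum_univ_two, hg, XBAC, XCAB, Matrix.mulVec, dotProduct,
      Fin.sum_univ_four, Matrix.cons_val_zero, Matrix.cons_val_one, Matrix.cons_val_two,
      Matrix.cons_val_three, Matrix.cons_val_four, Matrix.vecHead, Matrix.vecTail,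
      show (⟨2, by norm_num⟩ : Fin 5) = 2 from rfl,
      show (⟨3, by norm_num⟩ : Fin 5) = 3 from rfl,
      show (⟨4, by norm_num⟩ : Fin 5) = 4 from rfl]
    ring

private lemma cf_biprodC (A : Matrix (Fin 4) (Fin 4) ℂ) (c : Fin 2 → ℂ)
    (g : Fin 2 × Fin 2 → ℂ) (ψ : TriH 2 2 2)
    (hg : ∀ i j k, ψ (i, j, k) = c k * g (i, j)) (m : Fin 5) :
    (XCAB A (cj (c 0)) (cj (c 1))).mulVec
      ![cj (g (0, 0)), cj (g (0, 1)), cj (g (1, 0)), cj (g (1, 1))] m = cj (cf A ψ m) := by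
  fin_cases m <;>
  · simp [cf, Fin.sum_univ_two, hg, XBAC, XCAB, Matrix.mulVec, dotProduct,
      Fin.sum_univ_four, Matrix.cons_val_zero, Matrix.cons_val_one, Matrix.cons_val_two,
      Matrix.cons_val_three, Matrix.cons_val_four, Matrix.vecHead, Matrix.vecTail,
      show (⟨2, by norm_num⟩ : Fin 5) = 2 from rfl,
      show (⟨3, by norm_num⟩ : Fin 5) = 3 from rfl,
      show (⟨4, by norm_num⟩ : Fin 5) = 4 from rfl]
    ring

private lemma notGES_of_kernelB (A : Matrix (Fin 4) (Fin 4) ℂ) (β₀ β₁ : ℂ)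
    (hβ : ¬(β₀ = 0 ∧ β₁ = 0)) (g' : Fin 4 → ℂ) (hg' : g' ≠ 0)
    (hker : (XBAC A β₀ β₁).mulVec g' = 0) :
    ¬ IsGES3 ((Submodule.span ℂ (Set.range (curveA A)))ᗮ) := by
  intro hges
  set b : Fin 2 → ℂ := ![cj β₀, cj β₁] with hb
  set g : Fin 2 × Fin 2 → ℂ := fun q => cj (g' (idx4 q.1 q.2)) with hgdef
  set ψ : TriH 2 2 2 := WithLp.toLp 2 (fun p : Fin 2 × Fin 2 × Fin 2 => b p.2.1 * g (p.1, p.2.2)) with hψ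
  have hg : ∀ i j k, ψ (i, j, k) = b j * g (i, k) := fun _ _ _ => rfl
  have hb0 : cj (b 0) = β₀ := by simp [hb]
  have hb1 : cj (b 1) = β₁ := by simp [hb]
  have hvec : ![cj (g (0,0)), cj (g (0,1)), cj (g (1,0)), cj (g (1,1))] = g' := by
    funext t; fin_cases t <;> simp [hgdef]
  have hcf : ∀ m : Fin 5, cf A ψ m = 0 := by
    intro m
    have h1 := cf_biprodB A b g ψ hg m
    rw [hb0, hb1, hvec, hker] at h1
    simpa using h1.symm
  have hmem : ψ ∈ (Submodule.span ℂ (Set.range (curveA A)))ᗮ := (mem_V_iff A ψ).mpr hcf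
  obtain ⟨j, hbj⟩ : ∃ j : Fin 2, b j ≠ 0 := by
    by_cases h0 : β₀ = 0
    · have h1 : β₁ ≠ 0 := fun h => hβ ⟨h0, h⟩
      exact ⟨1, fun h => h1 (by rwa [show b 1 = cj β₁ from rfl, starRingEnd_apply,
        star_eq_zero] at h)⟩
    · exact ⟨0, fun h => h0 (by rwa [show b 0 = cj β₀ from rfl, starRingEnd_apply,
        star_eq_zero] at h)⟩
  obtain ⟨i, k, hik⟩ : ∃ i k : Fin 2, g (i, k) ≠ 0 := by
    by_contra hcon
    push_neg at hcon
    apply hg'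
    rw [← hvec]
    funext t
    fin_cases t <;> simp [hcon]
  have hne : ψ ≠ 0 := by
    intro h0
    have := congrFun (congrArg WithLp.ofLp h0) (i, j, k)
    rw [hg i j k] at this
    exact (mul_ne_zero hbj hik) (by simpa using this)
  exact (hges ψ hmem hne).2.2.1 ⟨b, g, hg⟩

private lemma notGES_of_kernelC (A : Matrix (Fin 4) (Fin 4) ℂ) (γ₀ γ₁ : ℂ)
    (hβ : ¬(γ₀ = 0 ∧ γ₁ = 0)) (g' : Fin 4 → ℂ) (hg' : g' ≠ 0)
    (hker : (XCAB A γ₀ γ₁).mulVec g' = 0) :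
    ¬ IsGES3 ((Submodule.span ℂ (Set.range (curveA A)))ᗮ) := by
  intro hges
  set c : Fin 2 → ℂ := ![cj γ₀, cj γ₁] with hb
  set g : Fin 2 × Fin 2 → ℂ := fun q => cj (g' (idx4 q.1 q.2)) with hgdef
  set ψ : TriH 2 2 2 := WithLp.toLp 2 (fun p : Fin 2 × Fin 2 × Fin 2 => c p.2.2 * g (p.1, p.2.1)) with hψ
  have hg : ∀ i j k, ψ (i, j, k) = c k * g (i, j) := fun _ _ _ => rfl
  have hb0 : cj (c 0) = γ₀ := by simp [hb]
  have hb1 : cj (c 1) = γ₁ := by simp [hb]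
  have hvec : ![cj (g (0,0)), cj (g (0,1)), cj (g (1,0)), cj (g (1,1))] = g' := by
    funext t; fin_cases t <;> simp [hgdef]
  have hcf : ∀ m : Fin 5, cf A ψ m = 0 := by
    intro m
    have h1 := cf_biprodC A c g ψ hg m
    rw [hb0, hb1, hvec, hker] at h1
    simpa using h1.symm
  have hmem : ψ ∈ (Submodule.span ℂ (Set.range (curveA A)))ᗮ := (mem_V_iff A ψ).mpr hcf
  obtain ⟨j, hbj⟩ : ∃ j : Fin 2, c j ≠ 0 := by
    by_cases h0 : γ₀ = 0
    · have h1 : γ₁ ≠ 0 := fun h => hβ ⟨h0, h⟩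
      exact ⟨1, fun h => h1 (by rwa [show c 1 = cj γ₁ from rfl, starRingEnd_apply,
        star_eq_zero] at h)⟩
    · exact ⟨0, fun h => h0 (by rwa [show c 0 = cj γ₀ from rfl, starRingEnd_apply,
        star_eq_zero] at h)⟩
  obtain ⟨i, k, hik⟩ : ∃ i k : Fin 2, g (i, k) ≠ 0 := by
    by_contra hcon
    push_neg at hcon
    apply hg'
    rw [← hvec]
    funext t
    fin_cases t <;> simp [hcon]
  have hne : ψ ≠ 0 := by
    intro h0
    have := congrFun (congrArg WithLp.ofLp h0) (i, k, j)
    rw [hg i k j] at this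
    exact (mul_ne_zero hbj hik) (by simpa using this)
  exact (hges ψ hmem hne).2.2.2 ⟨c, g, hg⟩

/-- `𝒱 = (span{(1,α) ⊗ 𝒜(1,α,α²,α³)})^⊥` is a GES of `ℂ²⊗ℂ²⊗ℂ²` iff
`𝒳_{B|AC}(β)` and `𝒳_{C|AB}(γ)` have rank 4 for all nonzero `β, γ ∈ ℂ²`. -/
theorem three_qubit_GES_iff_full_rank (A : Matrix (Fin 4) (Fin 4) ℂ)
    (hA : IsUnit A.det) :
    IsGES3 ((Submodule.span ℂ (Set.range (curveA A)))ᗮ) ↔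
      (∀ β₀ β₁ : ℂ, ¬(β₀ = 0 ∧ β₁ = 0) → (XBAC A β₀ β₁).rank = 4) ∧
      (∀ γ₀ γ₁ : ℂ, ¬(γ₀ = 0 ∧ γ₁ = 0) → (XCAB A γ₀ γ₁).rank = 4) := by
  constructor
  · intro hges
    constructor
    · intro β₀ β₁ hβ
      rw [rank_eq_four_iff]
      intro g' hker
      by_contra hg'
      exact notGES_of_kernelB A β₀ β₁ hβ g' hg' hker hges
    · intro γ₀ γ₁ hγ
      rw [rank_eq_four_iff]
      intro g' hker
      by_contra hg'
      exact notGES_of_kernelC A γ₀ γ₁ hγ g' hg' hker hges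
  · rintro ⟨hB, hC⟩ ψ hmem hne
    have hcf : ∀ m : Fin 5, cf A ψ m = 0 := (mem_V_iff A ψ).mp hmem
    refine ⟨hne, ?_, ?_, ?_⟩
    · intro h; exact hne (noBiprodA A hA ψ hcf h)
    · rintro ⟨b, g, hg⟩
      obtain ⟨p, hp⟩ : ∃ p, ψ p ≠ 0 := by
        by_contra h; push_neg at h; exact hne (PiLp.ext h)
      obtain ⟨i, j, k⟩ := p
      rw [hg] at hp
      have hbj : b j ≠ 0 := left_ne_zero_of_mul hp
      have hgik : g (i, k) ≠ 0 := right_ne_zero_of_mul hp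
      have hβ : ¬(cj (b 0) = 0 ∧ cj (b 1) = 0) := by
        rintro ⟨h0, h1⟩
        rw [starRingEnd_apply, star_eq_zero] at h0 h1
        fin_cases j
        · exact hbj h0
        · exact hbj h1
      have hrk := hB _ _ hβ
      rw [rank_eq_four_iff] at hrk
      have hker : (XBAC A (cj (b 0)) (cj (b 1))).mulVec
          ![cj (g (0,0)), cj (g (0,1)), cj (g (1,0)), cj (g (1,1))] = 0 := by
        funext m
        rw [cf_biprodB A b g ψ hg m, hcf m]
        simp
      have hz := hrk _ hker
      have hz2 : cj (g (i, k)) = 0 := by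
        have h4 := congrFun hz (idx4 i k)
        fin_cases i <;> fin_cases k <;> simpa using h4
      exact hgik (by rwa [starRingEnd_apply, star_eq_zero] at hz2)
    · rintro ⟨c, g, hg⟩
      obtain ⟨p, hp⟩ : ∃ p, ψ p ≠ 0 := by
        by_contra h; push_neg at h; exact hne (PiLp.ext h)
      obtain ⟨i, j, k⟩ := p
      rw [hg] at hp
      have hbj : c k ≠ 0 := left_ne_zero_of_mul hp
      have hgik : g (i, j) ≠ 0 := right_ne_zero_of_mul hp
      have hβ : ¬(cj (c 0) = 0 ∧ cj (c 1) = 0) := by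
        rintro ⟨h0, h1⟩
        rw [starRingEnd_apply, star_eq_zero] at h0 h1
        fin_cases k
        · exact hbj h0
        · exact hbj h1
      have hrk := hC _ _ hβ
      rw [rank_eq_four_iff] at hrk
      have hker : (XCAB A (cj (c 0)) (cj (c 1))).mulVec
          ![cj (g (0,0)), cj (g (0,1)), cj (g (1,0)), cj (g (1,1))] = 0 := by
        funext m
        rw [cf_biprodC A c g ψ hg m, hcf m]
        simp
      have hz := hrk _ hker
      have hz2 : cj (g (i, j)) = 0 := by
        have h4 := congrFun hz (idx4 i j)
        fin_cases i <;> fin_cases j <;> simpa using h4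
      exact hgik (by rwa [starRingEnd_apply, star_eq_zero] at hz2)
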